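/- For any skew Young diagram λ ⊂ μ that contains a rectangular subdiagram with r+2 rows and s+2 columns, the set of admissible tableaux B(λ ⊂ μ) is empty, where admissibility is with respect to J = J₊ ∪ J₋, |J₊| = r+1, |J₋| = s+1. -/

import Mathlib

/-- Auxiliary: there is no "admissible" filling of an `(|A|+1) × (|B|+1)` rectangle
with entries in `A ∪ B` (disjoint finsets of naturals), weakly increasing along rows
and columns, strictly increasing vertically on `A`-entries and horizontally on
`B`-entries. Proof by induction removing the maximal element of `A ∪ B`. -/
theorem stmt8aux (n : ℕ) : ∀ (A B : Finset ℕ), A.card + B.card = n →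
    ∀ f : ℕ → ℕ → ℕ,
    (∀ i ≤ A.card, ∀ j ≤ B.card, f i j ∈ A ∪ B) →
    (∀ i ≤ A.card, ∀ j, j + 1 ≤ B.card → f i j ≤ f i (j + 1)) →
    (∀ i, i + 1 ≤ A.card → ∀ j ≤ B.card, f i j ≤ f (i + 1) j) →
    (∀ i, i + 1 ≤ A.card → ∀ j ≤ B.card, f i j ∈ A → f (i + 1) j ∈ A →
      f i j < f (i + 1) j) →
    (∀ i ≤ A.card, ∀ j, j + 1 ≤ B.card → f i j ∈ B → f i (j + 1) ∈ B →
      f i j < f i (j + 1)) →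
    False := by
  induction n using Nat.strong_induction_on with
  | _ n ih =>
    intro A B hn f hmem hrow hcol hA hB
    by_cases hne : (A ∪ B).Nonempty
    · have hMmem := (A ∪ B).max'_mem hne
      set M := (A ∪ B).max' hne with hMdef
      rcases Finset.mem_union.mp hMmem with hMA | hMB
      · -- M ∈ A : M cannot appear in rows 0..A.card-1
        have hcard : (A.erase M).card + 1 = A.card := Finset.card_erase_add_one hMA
        have hneM : ∀ i ≤ (A.erase M).card, ∀ j ≤ B.card, f i j ≠ M := by
          intro i hi j hj heq
          have hi1 : i + 1 ≤ A.card := by omega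
          have h2 : f (i + 1) j ≤ M := Finset.le_max' _ _ (hmem (i + 1) hi1 j hj)
          have h3 : f i j ≤ f (i + 1) j := hcol i hi1 j hj
          have h4 : f (i + 1) j = M := le_antisymm h2 (heq ▸ h3)
          have h5 : f i j < f (i + 1) j :=
            hA i hi1 j hj (by rw [heq]; exact hMA) (by rw [h4]; exact hMA)
          omega
        refine ih ((A.erase M).card + B.card) (by omega) (A.erase M) B rfl f
          ?_ ?_ ?_ ?_ ?_
        · intro i hi j hj
          rcases Finset.mem_union.mp (hmem i (by omega) j hj) with h | h
          · exact Finset.mem_union_left _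
              (Finset.mem_erase.mpr ⟨hneM i hi j hj, h⟩)
          · exact Finset.mem_union_right _ h
        · intro i hi j hj; exact hrow i (by omega) j hj
        · intro i hi j hj; exact hcol i (by omega) j hj
        · intro i hi j hj h1 h2
          exact hA i (by omega) j hj (Finset.mem_of_mem_erase h1)
            (Finset.mem_of_mem_erase h2)
        · intro i hi j hj h1 h2; exact hB i (by omega) j hj h1 h2
      · -- M ∈ B : M cannot appear in columns 0..B.card-1
        have hcard : (B.erase M).card + 1 = B.card := Finset.card_erase_add_one hMB
        have hneM : ∀ i ≤ A.card, ∀ j ≤ (B.erase M).card, f i j ≠ M := by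
          intro i hi j hj heq
          have hj1 : j + 1 ≤ B.card := by omega
          have h2 : f i (j + 1) ≤ M := Finset.le_max' _ _ (hmem i hi (j + 1) hj1)
          have h3 : f i j ≤ f i (j + 1) := hrow i hi j hj1
          have h4 : f i (j + 1) = M := le_antisymm h2 (heq ▸ h3)
          have h5 : f i j < f i (j + 1) :=
            hB i hi j hj1 (by rw [heq]; exact hMB) (by rw [h4]; exact hMB)
          omega
        refine ih (A.card + (B.erase M).card) (by omega) A (B.erase M) rfl f
          ?_ ?_ ?_ ?_ ?_
        · intro i hi j hj
          rcases Finset.mem_union.mp (hmem i hi j (by omega)) with h | h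
          · exact Finset.mem_union_left _ h
          · exact Finset.mem_union_right _
              (Finset.mem_erase.mpr ⟨hneM i hi j hj, h⟩)
        · intro i hi j hj; exact hrow i hi j (by omega)
        · intro i hi j hj; exact hcol i hi j (by omega)
        · intro i hi j hj h1 h2; exact hA i hi j (by omega) h1 h2
        · intro i hi j hj h1 h2
          exact hB i hi j (by omega) (Finset.mem_of_mem_erase h1)
            (Finset.mem_of_mem_erase h2)
    · have h0 := hmem 0 (Nat.zero_le _) 0 (Nat.zero_le _)
      rw [Finset.not_nonempty_iff_eq_empty.mp hne] at h0
      exact absurd h0 (Finset.notMem_empty _)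

/-- for a skew Young diagram `λ ⊂ μ` (cells in row `i` are the columns `j`
with `lam i < j ≤ mu i`, for antitone `lam ≤ mu`) containing an `(r+2)×(s+2)`
rectangular subdiagram, the set of admissible tableaux is empty: there is no assignment
`b` of entries from `J = J₊ ∪ J₋` (`|J₊| = r+1`, `|J₋| = s+1`) to the cells such that
entries weakly increase along rows and columns, vertically adjacent `J₊`-entries
strictly increase, and horizontally adjacent `J₋`-entries strictly increase. -/
theorem stmt8 (r s : ℕ)
    (Jp Jm : Finset (Fin (r + s + 2)))
    (hdisj : Disjoint Jp Jm)
    (hunion : Jp ∪ Jm = Finset.univ)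
    (hcp : Jp.card = r + 1) (hcm : Jm.card = s + 1)
    (lam mu : ℕ → ℕ) (hlam : Antitone lam) (hmu : Antitone mu) (hle : lam ≤ mu)
    (cell : ℕ → ℕ → Prop)
    (hcell : ∀ i j, cell i j ↔ lam i < j ∧ j ≤ mu i)
    (i₀ j₀ : ℕ)
    (hrect : ∀ i ≤ r + 1, ∀ j ≤ s + 1, cell (i₀ + i) (j₀ + j)) :
    ¬ ∃ b : ℕ → ℕ → Fin (r + s + 2),
      (∀ i j, cell i j → cell i (j + 1) → b i j ≤ b i (j + 1)) ∧
      (∀ i j, cell i j → cell (i + 1) j → b i j ≤ b (i + 1) j) ∧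
      (∀ i j, cell i j → cell (i + 1) j →
        b i j ∈ Jp → b (i + 1) j ∈ Jp → b i j < b (i + 1) j) ∧
      (∀ i j, cell i j → cell i (j + 1) →
        b i j ∈ Jm → b i (j + 1) ∈ Jm → b i j < b i (j + 1)) := by
  rintro ⟨b, h1, h2, h3, h4⟩
  set A : Finset ℕ := Jp.image Fin.val with hAdef
  set B : Finset ℕ := Jm.image Fin.val with hBdef
  have hcA : A.card = r + 1 := by
    rw [hAdef, Finset.card_image_of_injective _ Fin.val_injective, hcp]
  have hcB : B.card = s + 1 := by
    rw [hBdef, Finset.card_image_of_injective _ Fin.val_injective, hcm]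
  have hmemA : ∀ x : Fin (r + s + 2), x.val ∈ A ↔ x ∈ Jp := by
    intro x
    constructor
    · intro h
      obtain ⟨y, hy, he⟩ := Finset.mem_image.mp h
      exact (Fin.val_injective he) ▸ hy
    · exact fun h => Finset.mem_image_of_mem _ h
  have hmemB : ∀ x : Fin (r + s + 2), x.val ∈ B ↔ x ∈ Jm := by
    intro x
    constructor
    · intro h
      obtain ⟨y, hy, he⟩ := Finset.mem_image.mp h
      exact (Fin.val_injective he) ▸ hy
    · exact fun h => Finset.mem_image_of_mem _ h
  have hcell' : ∀ i ≤ r + 1, ∀ j ≤ s + 1, cell (i₀ + i) (j₀ + j) := hrect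
  refine stmt8aux (A.card + B.card) A B rfl
    (fun i j => (b (i₀ + i) (j₀ + j)).val) ?_ ?_ ?_ ?_ ?_
  · intro i hi j hj
    have hx : b (i₀ + i) (j₀ + j) ∈ Jp ∪ Jm := by
      rw [hunion]; exact Finset.mem_univ _
    rcases Finset.mem_union.mp hx with h | h
    · exact Finset.mem_union_left _ ((hmemA _).mpr h)
    · exact Finset.mem_union_right _ ((hmemB _).mpr h)
  · intro i hi j hj
    have c1 := hcell' i (by omega) j (by omega)
    have c2 := hcell' i (by omega) (j + 1) (by omega)
    exact h1 (i₀ + i) (j₀ + j) c1 c2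
  · intro i hi j hj
    have c1 := hcell' i (by omega) j (by omega)
    have c2 := hcell' (i + 1) (by omega) j (by omega)
    exact h2 (i₀ + i) (j₀ + j) c1 c2
  · intro i hi j hj ha1 ha2
    have c1 := hcell' i (by omega) j (by omega)
    have c2 := hcell' (i + 1) (by omega) j (by omega)
    exact h3 (i₀ + i) (j₀ + j) c1 c2 ((hmemA _).mp ha1) ((hmemA _).mp ha2)
  · intro i hi j hj hb1 hb2
    have c1 := hcell' i (by omega) j (by omega)
    have c2 := hcell' i (by omega) (j + 1) (by omega)
    exact h4 (i₀ + i) (j₀ + j) c1 c2 ((hmemB _).mp hb1) ((hmemB _).mp hb2)
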